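/- Let T be a pretriangulated category with shift functor Σ, let X →t Y →s Z →u ΣX be a distinguished triangle, and let f : X → X and g : Y → Y be split idempotents satisfying g ∘ t = t ∘ f. Then there exists a split idempotent h : Z → Z with h ∘ s = s ∘ g and (Σf) ∘ u = u ∘ h, together with splittings π_f : X → im(f), ι_f : im(f) → X, π_g : Y → im(g), ι_g : im(g) → Y, π_h : Z → im(h), ι_h : im(h) → Z, and a distinguished triangle im(f) → im(g) → im(h) → Σ im(f) such that both (π_f, π_g, π_h) and (ι_f, ι_g, ι_h) are morphisms of triangles from X → Y → Z → ΣX to the triangle of images and back respectively. -/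

import Mathlib

open CategoryTheory CategoryTheory.Limits CategoryTheory.Pretriangulated

/-- Let `X ⟶ Y ⟶ Z ⟶ X⟦1⟧` be a distinguished triangle in a pretriangulated category,
and let `f : X ⟶ X`, `g : Y ⟶ Y` be split idempotents (with given splittings) commuting
with `t : X ⟶ Y`. Then there is a split idempotent `h : Z ⟶ Z` compatible with `s` and
`u`, with a splitting `(πh, ιh)`, and a distinguished triangle
`im f ⟶ im g ⟶ im h ⟶ (im f)⟦1⟧` such that the projections `(πf, πg, πh)` and the
inclusions `(ιf, ιg, ιh)` are morphisms of triangles. -/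
theorem splitIdempotent_of_distTriang {T : Type*} [Category T] [Preadditive T]
    [HasZeroObject T] [HasShift T ℤ] [∀ n : ℤ, (shiftFunctor T n).Additive]
    [Pretriangulated T]
    {X Y Z : T} (t : X ⟶ Y) (s : Y ⟶ Z) (u : Z ⟶ X⟦(1 : ℤ)⟧)
    (hdist : Triangle.mk t s u ∈ distTriang T)
    (f : X ⟶ X) (g : Y ⟶ Y)
    {If Ig : T} (πf : X ⟶ If) (ιf : If ⟶ X) (hf₁ : πf ≫ ιf = f) (hf₂ : ιf ≫ πf = 𝟙 If)
    (πg : Y ⟶ Ig) (ιg : Ig ⟶ Y) (hg₁ : πg ≫ ιg = g) (hg₂ : ιg ≫ πg = 𝟙 Ig)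
    (hcomm : t ≫ g = f ≫ t) :
    ∃ (h : Z ⟶ Z) (Ih : T) (πh : Z ⟶ Ih) (ιh : Ih ⟶ Z)
      (t' : If ⟶ Ig) (s' : Ig ⟶ Ih) (u' : Ih ⟶ If⟦(1 : ℤ)⟧),
      s ≫ h = g ≫ s ∧ h ≫ u = u ≫ f⟦(1 : ℤ)⟧' ∧
      πh ≫ ιh = h ∧ ιh ≫ πh = 𝟙 Ih ∧
      (Triangle.mk t' s' u' ∈ distTriang T) ∧
      (t ≫ πg = πf ≫ t' ∧ s ≫ πh = πg ≫ s' ∧ u ≫ πf⟦(1 : ℤ)⟧' = πh ≫ u') ∧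
      (t' ≫ ιg = ιf ≫ t ∧ s' ≫ ιh = ιg ≫ s ∧ u' ≫ ιf⟦(1 : ℤ)⟧' = ιh ≫ u) := by
  -- the induced map between images
  set t' : If ⟶ Ig := ιf ≫ t ≫ πg with ht'
  obtain ⟨Ih, s', u', hdist'⟩ := Pretriangulated.distinguished_cocone_triangle t'
  have hgπ : g ≫ πg = πg := by rw [← hg₁, Category.assoc, hg₂, Category.comp_id]
  have hιf : ιf ≫ f = ιf := by rw [← hf₁, ← Category.assoc, hf₂, Category.id_comp]
  -- projection square
  have hπcomm : t ≫ πg = πf ≫ t' := by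
    rw [ht', ← Category.assoc, hf₁, ← Category.assoc, ← hcomm, Category.assoc, hgπ]
  obtain ⟨πh, hπ₁, hπ₂⟩ : ∃ πh : Z ⟶ Ih, s ≫ πh = πg ≫ s' ∧
      u ≫ πf⟦(1 : ℤ)⟧' = πh ≫ u' := Pretriangulated.complete_distinguished_triangle_morphism
    (Triangle.mk t s u) (Triangle.mk t' s' u') hdist hdist' πf πg hπcomm
  -- inclusion square
  have hιcomm : t' ≫ ιg = ιf ≫ t := by
    rw [ht', Category.assoc, Category.assoc, hg₁, hcomm, ← Category.assoc, hιf]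
  obtain ⟨ι, hι₁, hι₂⟩ : ∃ ι : Ih ⟶ Z, s' ≫ ι = ιg ≫ s ∧
      u' ≫ ιf⟦(1 : ℤ)⟧' = ι ≫ u := Pretriangulated.complete_distinguished_triangle_morphism
    (Triangle.mk t' s' u') (Triangle.mk t s u) hdist' hdist ιf ιg hιcomm
  -- the composite endomorphism of the image triangle is an isomorphism
  set e : Ih ⟶ Ih := ι ≫ πh with he
  have hes : s' ≫ e = s' := by
    rw [he, ← Category.assoc, hι₁, Category.assoc, hπ₁, ← Category.assoc, hg₂,
      Category.id_comp]
  have heu : e ≫ u' = u' := by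
    rw [he, Category.assoc, ← hπ₂, ← Category.assoc, ← hι₂, Category.assoc,
      ← Functor.map_comp, hf₂, CategoryTheory.Functor.map_id, Category.comp_id]
  have heIso : IsIso e := Pretriangulated.isIso₃_of_isIso₁₂
    (Triangle.homMk (Triangle.mk t' s' u') (Triangle.mk t' s' u') (𝟙 If) (𝟙 Ig) e
      (by show t' ≫ 𝟙 Ig = 𝟙 If ≫ t'; simp) (by show s' ≫ e = 𝟙 Ig ≫ s'; simpa using hes)
      (by show u' ≫ (𝟙 If)⟦(1 : ℤ)⟧' = e ≫ u'; simpa using heu.symm))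
    hdist' hdist' (by show IsIso (𝟙 If); infer_instance) (by show IsIso (𝟙 Ig); infer_instance)
  set ιh : Ih ⟶ Z := inv e ≫ ι with hιh
  have hιhπh : ιh ≫ πh = 𝟙 Ih := by
    rw [hιh, Category.assoc, ← he, IsIso.inv_hom_id]
  have hesinv : s' ≫ inv e = s' := by
    conv_lhs => rw [← hes]
    rw [Category.assoc, IsIso.hom_inv_id, Category.comp_id]
  have heuinv : inv e ≫ u' = u' := by
    conv_lhs => rw [← heu]
    rw [← Category.assoc, IsIso.inv_hom_id, Category.id_comp]
  have hes' : s' ≫ ιh = ιg ≫ s := by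
    rw [hιh, ← Category.assoc, hesinv, hι₁]
  have heu' : ιh ≫ u = u' ≫ ιf⟦(1 : ℤ)⟧' := by
    rw [hιh, Category.assoc, ← hι₂, ← Category.assoc, heuinv]
  refine ⟨πh ≫ ιh, Ih, πh, ιh, t', s', u', ?_, ?_, rfl, hιhπh, hdist',
    ⟨hπcomm, hπ₁, hπ₂⟩, ⟨hιcomm, hes', heu'.symm⟩⟩
  · rw [← Category.assoc, hπ₁, Category.assoc, hes', ← Category.assoc, hg₁]
  · rw [Category.assoc, heu', ← Category.assoc, ← hπ₂, Category.assoc,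
      ← Functor.map_comp, hf₁]
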